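/- Let {f_λ : L_λ → M_λ} be a family of morphisms of left S-semimodules. The direct sum map f : ⊕_λ L_λ → ⊕_λ M_λ is k-uniform (respectively i-uniform, uniform) if and only if every f_λ is k-uniform (respectively i-uniform, uniform). -/

import Mathlib

open Function

/-- k-uniform map: equal images force a translation by kernel elements. -/
def KUniform {A B : Type*} [Add A] [Zero B] (f : A → B) : Prop :=
  ∀ a₁ a₂, f a₁ = f a₂ → ∃ k₁ k₂, f k₁ = 0 ∧ f k₂ = 0 ∧ a₁ + k₁ = a₂ + k₂

/-- i-uniform map: the image is a subtractive subset. -/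
def IUniform {A B : Type*} [Add B] (f : A → B) : Prop :=
  ∀ (b : B) (a₁ a₂ : A), b + f a₁ = f a₂ → ∃ a, f a = b

def UniformMap {A B : Type*} [Add A] [Zero B] [Add B] (f : A → B) : Prop :=
  KUniform f ∧ IUniform f

/-- The direct sum `⊕ f_λ : ⊕ L_λ → ⊕ M_λ` of a family of morphisms
of left `S`-semimodules is k-uniform (resp. i-uniform, uniform) iff every `f_λ` is
k-uniform (resp. i-uniform, uniform). -/
theorem stmt11 (S : Type) [Semiring S] (Λ : Type) (L M : Λ → Type)
    [∀ l, AddCommMonoid (L l)] [∀ l, Module S (L l)]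
    [∀ l, AddCommMonoid (M l)] [∀ l, Module S (M l)] (f : ∀ l, L l →ₗ[S] M l) :
    (KUniform ⇑(DFinsupp.mapRange.linearMap f) ↔ ∀ l, KUniform ⇑(f l)) ∧
    (IUniform ⇑(DFinsupp.mapRange.linearMap f) ↔ ∀ l, IUniform ⇑(f l)) ∧
    (UniformMap ⇑(DFinsupp.mapRange.linearMap f) ↔ ∀ l, UniformMap ⇑(f l)) := by
  classical
  set F := DFinsupp.mapRange.linearMap (R := S) f with hF
  have hFapp : ∀ (x : Π₀ l, L l) (l : Λ), F x l = f l (x l) := by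
    intro x l
    rw [hF]; rfl
  have hFsingle : ∀ (l : Λ) (a : L l), F (DFinsupp.single l a) = DFinsupp.single l (f l a) := by
    intro l a
    rw [hF]; exact DFinsupp.mapRange_single (hf := fun i => (f i).map_zero)
  have hK : KUniform ⇑F ↔ ∀ l, KUniform ⇑(f l) := by
    constructor
    · intro h l a₁ a₂ hEq
      obtain ⟨k₁, k₂, hk₁, hk₂, hsum⟩ :=
        h (DFinsupp.single l a₁) (DFinsupp.single l a₂) (by rw [hFsingle, hFsingle, hEq])
      refine ⟨k₁ l, k₂ l, ?_, ?_, ?_⟩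
      · have := congrArg (fun g : Π₀ l, M l => g l) hk₁
        simpa [hFapp] using this
      · have := congrArg (fun g : Π₀ l, M l => g l) hk₂
        simpa [hFapp] using this
      · have := congrArg (fun g : Π₀ l, L l => g l) hsum
        simpa [DFinsupp.add_apply] using this
    · intro h x₁ x₂ hEq
      have hl : ∀ l, f l (x₁ l) = f l (x₂ l) := fun l => by
        rw [← hFapp, ← hFapp, hEq]
      choose k₁ k₂ hk₁ hk₂ hsum using fun l => h l (x₁ l) (x₂ l) (hl l)
      set s : Finset Λ := x₁.support ∪ x₂.support with hs
      refine ⟨DFinsupp.mk s (fun l => k₁ l), DFinsupp.mk s (fun l => k₂ l), ?_, ?_, ?_⟩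
      · ext j
        rw [hFapp]
        by_cases hj : j ∈ s
        · simp [DFinsupp.mk_apply, hj, hk₁ j]
        · simp [DFinsupp.mk_apply, hj]
      · ext j
        rw [hFapp]
        by_cases hj : j ∈ s
        · simp [DFinsupp.mk_apply, hj, hk₂ j]
        · simp [DFinsupp.mk_apply, hj]
      · ext j
        by_cases hj : j ∈ s
        · simp [DFinsupp.add_apply, DFinsupp.mk_apply, hj, hsum j]
        · have h1 : x₁ j = 0 := by
            rw [← DFinsupp.notMem_support_iff]; intro hc; exact hj (Finset.mem_union_left _ hc)
          have h2 : x₂ j = 0 := by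
            rw [← DFinsupp.notMem_support_iff]; intro hc; exact hj (Finset.mem_union_right _ hc)
          simp [DFinsupp.add_apply, DFinsupp.mk_apply, hj, h1, h2]
  have hI : IUniform ⇑F ↔ ∀ l, IUniform ⇑(f l) := by
    constructor
    · intro h l b a₁ a₂ hb
      obtain ⟨a, ha⟩ := h (DFinsupp.single l b) (DFinsupp.single l a₁) (DFinsupp.single l a₂) (by
        rw [hFsingle, hFsingle, ← DFinsupp.single_add, hb])
      refine ⟨a l, ?_⟩
      have := congrArg (fun g : Π₀ l, M l => g l) ha
      simpa [hFapp] using this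
    · intro h y x₁ x₂ hy
      have hl : ∀ l, y l + f l (x₁ l) = f l (x₂ l) := fun l => by
        have := congrArg (fun g : Π₀ l, M l => g l) hy
        simpa [hFapp, DFinsupp.add_apply] using this
      choose a ha using fun l => h l (y l) (x₁ l) (x₂ l) (hl l)
      refine ⟨DFinsupp.mk y.support (fun l => a l), ?_⟩
      ext j
      rw [hFapp]
      by_cases hj : j ∈ y.support
      · simp [DFinsupp.mk_apply, hj, ha j]
      · have : y j = 0 := DFinsupp.notMem_support_iff.mp hj
        simp [DFinsupp.mk_apply, hj, this]
  refine ⟨hK, hI, ?_⟩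
  constructor
  · rintro ⟨h1, h2⟩ l
    exact ⟨hK.1 h1 l, hI.1 h2 l⟩
  · intro h
    exact ⟨hK.2 (fun l => (h l).1), hI.2 (fun l => (h l).2)⟩
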